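/- If G is a graph and (A, B) is a bipartition of V(G), then s̊(G[A]) + s̊(G[B]) ≤ s̊(G) ≤ s̊(G[A]) + s̊(G[B]) + |[A,B]|, where G[S] denotes the subgraph of G induced by S and [A,B] denotes the set of edges of G with one endpoint in A and one endpoint in B. -/

import Mathlib

variable {V : Type} [Fintype V] [DecidableEq V]

open Classical in
/-- Sum-color cost (optimal total score of the slow-coloring game) of the subgraph
of `G` induced by `S`: it is `0` when there are no vertices, and otherwise the maximum
over nonempty marked sets `M ⊆ S` of `|M|` plus the minimum over nonempty independent
subsets `I ⊆ M` of the sum-color cost of the graph with `I` deleted. -/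
noncomputable def scost (G : SimpleGraph V) (S : Finset V) : ℕ :=
  if S = ∅ then 0
  else
    (S.powerset.erase ∅).attach.sup fun M =>
      M.1.card +
      WithBot.unbotD 0
        ((((M.1.powerset.erase ∅).filter
              fun I => ∀ x ∈ I, ∀ y ∈ I, ¬ G.Adj x y).attach.image
            fun I => scost G (S \ I.1)).min)
termination_by S.card
decreasing_by
  · have hI := I.2
    have hM := M.2
    simp only [Finset.mem_filter, Finset.mem_erase, Finset.mem_powerset] at hI hM
    have hsub : I.1 ⊆ S := hI.1.2.trans hM.2
    have hne : I.1.Nonempty := Finset.nonempty_iff_ne_empty.mpr hI.1.1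
    exact Finset.card_lt_card (Finset.sdiff_ssubset hsub hne)
open Classical

variable {G : SimpleGraph V}

lemma scost_empty (G : SimpleGraph V) : scost G ∅ = 0 := by rw [scost]; simp

open Classical in
lemma scost_eq (G : SimpleGraph V) {S : Finset V} (hS : S ≠ ∅) :
    scost G S = (S.powerset.erase ∅).attach.sup (fun M =>
      M.1.card +
      WithBot.unbotD 0
        ((((M.1.powerset.erase ∅).filter
              fun I => ∀ x ∈ I, ∀ y ∈ I, ¬ G.Adj x y).attach.image
            fun I => scost G (S \ I.1)).min)) := by
  rw [scost]; simp [hS]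

lemma unbot'_min_eq {T : Finset ℕ} (hT : T.Nonempty) :
    WithBot.unbotD 0 T.min = T.min' hT := by
  rw [← Finset.coe_min' hT]; rfl

open Classical in
lemma F_nonempty {M : Finset V} (hMne : M ≠ ∅) :
    ((M.powerset.erase ∅).filter
      fun I => ∀ x ∈ I, ∀ y ∈ I, ¬ G.Adj x y).Nonempty := by
  obtain ⟨x, hx⟩ := Finset.nonempty_iff_ne_empty.mpr hMne
  refine ⟨({x} : Finset V), ?_⟩
  simp only [Finset.mem_filter, Finset.mem_erase, Finset.mem_powerset]
  refine ⟨⟨Finset.singleton_ne_empty x, Finset.singleton_subset_iff.mpr hx⟩, ?_⟩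
  intro a ha b hb
  simp only [Finset.mem_singleton] at ha hb
  subst ha; subst hb; exact G.loopless.irrefl _

/-- Lister-side: marking `M` guarantees `|M|` plus whatever every response leaves. -/
lemma le_scost {S M : Finset V} (hM : M ⊆ S) (hMne : M ≠ ∅) (m : ℕ)
    (h : ∀ I, I ⊆ M → I ≠ ∅ → (∀ x ∈ I, ∀ y ∈ I, ¬ G.Adj x y) → m ≤ scost G (S \ I)) :
    M.card + m ≤ scost G S := by
  classical
  have hS : S ≠ ∅ := fun e => hMne (Finset.subset_empty.mp (e ▸ hM))
  rw [scost_eq G hS]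
  have hmem : M ∈ S.powerset.erase ∅ := by
    simp [Finset.mem_erase, Finset.mem_powerset, hMne, hM]
  refine le_trans ?_ (Finset.le_sup (Finset.mem_attach _ ⟨M, hmem⟩))
  simp only
  have hFne := F_nonempty (G := G) hMne
  have hTne : (((M.powerset.erase ∅).filter
      fun I => ∀ x ∈ I, ∀ y ∈ I, ¬ G.Adj x y).attach.image
        fun I => scost G (S \ I.1)).Nonempty := hFne.attach.image _
  rw [unbot'_min_eq hTne]
  refine Nat.add_le_add_left ?_ _
  refine Finset.le_min' _ _ _ ?_
  intro y hy
  simp only [Finset.mem_image, Finset.mem_attach, true_and, Subtype.exists] at hy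
  obtain ⟨I, hI, rfl⟩ := hy
  simp only [Finset.mem_filter, Finset.mem_erase, Finset.mem_powerset] at hI
  exact h I hI.1.2 hI.1.1 hI.2

/-- Painter-side: some response to `M` achieves the value. -/
lemma exists_response {S M : Finset V} (hM : M ⊆ S) (hMne : M ≠ ∅) :
    ∃ I, I ⊆ M ∧ I ≠ ∅ ∧ (∀ x ∈ I, ∀ y ∈ I, ¬ G.Adj x y) ∧
      M.card + scost G (S \ I) ≤ scost G S := by
  classical
  have hFne := F_nonempty (G := G) hMne
  have hTne : (((M.powerset.erase ∅).filter
      fun I => ∀ x ∈ I, ∀ y ∈ I, ¬ G.Adj x y).attach.image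
        fun I => scost G (S \ I.1)).Nonempty := hFne.attach.image _
  have hmin := Finset.min'_mem _ hTne
  simp only [Finset.mem_image, Finset.mem_attach, true_and, Subtype.exists] at hmin
  obtain ⟨I, hI, hIeq⟩ := hmin
  have hI' := hI
  simp only [Finset.mem_filter, Finset.mem_erase, Finset.mem_powerset] at hI'
  refine ⟨I, hI'.1.2, hI'.1.1, hI'.2, ?_⟩
  have := le_scost (G := G) hM hMne (scost G (S \ I)) ?_
  · exact this
  · intro J hJ hJne hJind
    rw [hIeq]
    refine Finset.min'_le _ _ ?_
    have hJmem : J ∈ (M.powerset.erase ∅).filter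
        fun I => ∀ x ∈ I, ∀ y ∈ I, ¬ G.Adj x y := by
      simp only [Finset.mem_filter, Finset.mem_erase, Finset.mem_powerset]
      exact ⟨⟨hJne, hJ⟩, hJind⟩
    exact Finset.mem_image.mpr ⟨⟨J, hJmem⟩, Finset.mem_attach _ _, rfl⟩

/-- Optimal mark: some `M` such that every response is at least the value. -/
lemma exists_mark {S : Finset V} (hS : S ≠ ∅) :
    ∃ M, M ⊆ S ∧ M ≠ ∅ ∧ ∀ I, I ⊆ M → I ≠ ∅ →
      (∀ x ∈ I, ∀ y ∈ I, ¬ G.Adj x y) → scost G S ≤ M.card + scost G (S \ I) := by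
  classical
  have hPne : (S.powerset.erase ∅).Nonempty := ⟨S, by
    simp [Finset.mem_erase, Finset.mem_powerset, hS]⟩
  obtain ⟨M, _, hMeq⟩ := Finset.exists_mem_eq_sup (S.powerset.erase ∅).attach
    (hPne.attach) (fun M =>
      M.1.card +
      WithBot.unbotD 0
        ((((M.1.powerset.erase ∅).filter
              fun I => ∀ x ∈ I, ∀ y ∈ I, ¬ G.Adj x y).attach.image
            fun I => scost G (S \ I.1)).min))
  have hM2 := M.2
  simp only [Finset.mem_erase, Finset.mem_powerset] at hM2
  refine ⟨M.1, hM2.2, hM2.1, ?_⟩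
  intro I hI hIne hIind
  rw [scost_eq G hS, hMeq]
  have hFne := F_nonempty (G := G) hM2.1
  have hTne : (((M.1.powerset.erase ∅).filter
      fun I => ∀ x ∈ I, ∀ y ∈ I, ¬ G.Adj x y).attach.image
        fun I => scost G (S \ I.1)).Nonempty := hFne.attach.image _
  simp only [unbot'_min_eq hTne]
  refine Nat.add_le_add_left ?_ _
  refine Finset.min'_le _ _ ?_
  have hImem : I ∈ (M.1.powerset.erase ∅).filter
      fun I => ∀ x ∈ I, ∀ y ∈ I, ¬ G.Adj x y := by
    simp only [Finset.mem_filter, Finset.mem_erase, Finset.mem_powerset]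
    exact ⟨⟨hIne, hI⟩, hIind⟩
  exact Finset.mem_image.mpr ⟨⟨I, hImem⟩, Finset.mem_attach _ _, rfl⟩

lemma superadd (G : SimpleGraph V) (B : Finset V) :
    ∀ A : Finset V, Disjoint A B → scost G A + scost G B ≤ scost G (A ∪ B) := by
  intro A
  induction A using Finset.strongInduction with
  | _ A ih =>
    intro hdisj
    rcases eq_or_ne A ∅ with rfl | hA
    · simp [scost_empty]
    · obtain ⟨M, hMA, hMne, hMopt⟩ := exists_mark (G := G) hA
      have hMcard : M.card ≤ scost G A := by
        have := le_scost (G := G) hMA hMne 0 (fun I _ _ _ => Nat.zero_le _)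
        omega
      have key : M.card + (scost G A + scost G B - M.card) ≤ scost G (A ∪ B) := by
        refine le_scost (G := G) (hMA.trans Finset.subset_union_left) hMne _ ?_
        intro I hIM hIne hIind
        have hIA : I ⊆ A := hIM.trans hMA
        have hsd : (A ∪ B) \ I = (A \ I) ∪ B := by
          rw [Finset.union_sdiff_distrib,
            Finset.sdiff_eq_self_of_disjoint ((hdisj.symm.mono_right hIA))]
        rw [hsd]
        have hss : A \ I ⊂ A := Finset.sdiff_ssubset hIA
          (Finset.nonempty_iff_ne_empty.mpr hIne)
        have h1 := ih (A \ I) hss (hdisj.mono_left (Finset.sdiff_subset))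
        have h2 := hMopt I hIM hIne hIind
        omega
      have : M.card ≤ scost G A + scost G B := le_trans hMcard (Nat.le_add_right _ _)
      omega

lemma scost_mono (G : SimpleGraph V) {S T : Finset V} (hST : S ⊆ T) :
    scost G S ≤ scost G T := by
  have h := superadd G (T \ S) S Finset.disjoint_sdiff
  rw [Finset.union_sdiff_of_subset hST] at h
  omega

open Classical in
/-- Cross pairs: ordered pairs `(a,b)` with `a ∈ A ∩ S`, `b ∈ B ∩ S`, `a` adjacent to `b`. -/
noncomputable def cp (G : SimpleGraph V) (A B S : Finset V) : Finset (V × V) :=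
  (A ×ˢ B).filter fun p => p.1 ∈ S ∧ p.2 ∈ S ∧ G.Adj p.1 p.2

open Classical in
lemma mem_cp {G : SimpleGraph V} {A B S : Finset V} {p : V × V} :
    p ∈ cp G A B S ↔ p.1 ∈ A ∧ p.2 ∈ B ∧ p.1 ∈ S ∧ p.2 ∈ S ∧ G.Adj p.1 p.2 := by
  simp [cp, Finset.mem_filter, Finset.mem_product]; tauto

lemma cp_mono {G : SimpleGraph V} {A B S S' : Finset V} (h : S' ⊆ S) :
    cp G A B S' ⊆ cp G A B S := by
  intro p hp
  rw [mem_cp] at hp ⊢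
  exact ⟨hp.1, hp.2.1, h hp.2.2.1, h hp.2.2.2.1, hp.2.2.2.2⟩

/-- Either an optimal response to `M`, or the empty response when `M = ∅`. -/
lemma resp_or_empty (G : SimpleGraph V) {T M : Finset V} (hM : M ⊆ T) :
    ∃ I, I ⊆ M ∧ (M ≠ ∅ → I ≠ ∅) ∧ (∀ x ∈ I, ∀ y ∈ I, ¬ G.Adj x y) ∧
      M.card + scost G (T \ I) ≤ scost G T := by
  rcases eq_or_ne M ∅ with rfl | hMne
  · exact ⟨∅, le_refl _, fun h => absurd rfl h, by simp, by simp⟩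
  · obtain ⟨I, h1, h2, h3, h4⟩ := exists_response (G := G) hM hMne
    exact ⟨I, h1, fun _ => h2, h3, h4⟩

open Classical in
lemma upper (G : SimpleGraph V) (A B : Finset V) (hdisj : Disjoint A B) :
    ∀ S : Finset V, S ⊆ A ∪ B →
      scost G S ≤ scost G (S ∩ A) + scost G (S ∩ B) + (cp G A B S).card := by
  intro S
  induction S using Finset.strongInduction with
  | _ S ih =>
  intro hSAB
  rcases eq_or_ne S ∅ with rfl | hS
  · simp [scost_empty]
  obtain ⟨M, hMS, hMne, hMopt⟩ := exists_mark (G := G) hS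
  set MA := M ∩ A with hMAdef
  set MB := M ∩ B with hMBdef
  have hMA_sub : MA ⊆ S ∩ A := Finset.inter_subset_inter hMS (le_refl _)
  obtain ⟨IA, hIA_MA, hIA_ne, hIA_ind, hIA_resp⟩ :=
    resp_or_empty G (M := MA) (T := S ∩ A) hMA_sub
  set N := MB.filter (fun b => ∃ a, a ∈ IA ∧ G.Adj a b) with hNdef
  set MB' := MB \ N with hMB'def
  have hMB'_sub : MB' ⊆ S ∩ B :=
    (Finset.sdiff_subset).trans (Finset.inter_subset_inter hMS (le_refl _))
  obtain ⟨IB, hIB_MB', hIB_ne, hIB_ind, hIB_resp⟩ :=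
    resp_or_empty G (M := MB') (T := S ∩ B) hMB'_sub
  set I := IA ∪ IB with hIdef
  have hIA_A : IA ⊆ A := hIA_MA.trans Finset.inter_subset_right
  have hIB_B : IB ⊆ B := hIB_MB'.trans ((Finset.sdiff_subset).trans Finset.inter_subset_right)
  have hIA_M : IA ⊆ M := hIA_MA.trans Finset.inter_subset_left
  have hIB_M : IB ⊆ M := hIB_MB'.trans ((Finset.sdiff_subset).trans Finset.inter_subset_left)
  have hI_M : I ⊆ M := Finset.union_subset hIA_M hIB_M
  have hMsplit : MA ∪ MB = M := by
    rw [hMAdef, hMBdef, ← Finset.inter_union_distrib_left]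
    exact Finset.inter_eq_left.mpr (hMS.trans hSAB)
  have hI_ne : I ≠ ∅ := by
    rcases eq_or_ne MA ∅ with hMAe | hMAne
    · have hIAe : IA = ∅ := Finset.subset_empty.mp (hMAe ▸ hIA_MA)
      have hNe : N = ∅ := by
        rw [hNdef]
        refine Finset.filter_eq_empty_iff.mpr ?_
        rintro b _ ⟨a, ha, _⟩
        simp [hIAe] at ha
      have hMB'ne : MB' ≠ ∅ := by
        rw [hMB'def, hNe, Finset.sdiff_empty]
        intro h
        apply hMne
        rw [← hMsplit, hMAe, h, Finset.union_empty]
      have := hIB_ne hMB'ne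
      intro h
      exact this (Finset.subset_empty.mp (h ▸ Finset.subset_union_right))
    · have := hIA_ne hMAne
      intro h
      exact this (Finset.subset_empty.mp (h ▸ Finset.subset_union_left))
  have hI_ind : ∀ x ∈ I, ∀ y ∈ I, ¬ G.Adj x y := by
    intro x hx y hy hadj
    rw [hIdef, Finset.mem_union] at hx hy
    have key : ∀ a ∈ IA, ∀ b ∈ IB, ¬ G.Adj a b := by
      intro a ha b hb hab
      have hbN : b ∈ N := by
        rw [hNdef, Finset.mem_filter]
        exact ⟨hIB_MB'.trans Finset.sdiff_subset hb, a, ha, hab⟩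
      have : b ∉ N := (Finset.mem_sdiff.mp (hIB_MB' hb)).2
      exact this hbN
    rcases hx with hx | hx <;> rcases hy with hy | hy
    · exact hIA_ind x hx y hy hadj
    · exact key x hx y hy hadj
    · exact key y hy x hx hadj.symm
    · exact hIB_ind x hx y hy hadj
  have hmain := hMopt I hI_M hI_ne hI_ind
  have hss : S \ I ⊂ S := Finset.sdiff_ssubset (hI_M.trans hMS)
    (Finset.nonempty_iff_ne_empty.mpr hI_ne)
  have hIH := ih (S \ I) hss ((Finset.sdiff_subset).trans hSAB)
  have e1 : (S \ I) ∩ A = (S ∩ A) \ IA := by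
    ext x
    simp only [Finset.mem_inter, Finset.mem_sdiff, hIdef, Finset.mem_union]
    constructor
    · rintro ⟨⟨hxS, hxI⟩, hxA⟩
      exact ⟨⟨hxS, hxA⟩, fun h => hxI (Or.inl h)⟩
    · rintro ⟨⟨hxS, hxA⟩, hxIA⟩
      refine ⟨⟨hxS, ?_⟩, hxA⟩
      rintro (h | h)
      · exact hxIA h
      · exact (Finset.disjoint_left.mp hdisj hxA) (hIB_B h)
  have e2 : (S \ I) ∩ B = (S ∩ B) \ IB := by
    ext x
    simp only [Finset.mem_inter, Finset.mem_sdiff, hIdef, Finset.mem_union]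
    constructor
    · rintro ⟨⟨hxS, hxI⟩, hxB⟩
      exact ⟨⟨hxS, hxB⟩, fun h => hxI (Or.inr h)⟩
    · rintro ⟨⟨hxS, hxB⟩, hxIB⟩
      refine ⟨⟨hxS, ?_⟩, hxB⟩
      rintro (h | h)
      · exact (Finset.disjoint_right.mp hdisj hxB) (hIA_A h)
      · exact hxIB h
  rw [e1, e2] at hIH
  have hMcard : M.card = MA.card + MB'.card + N.card := by
    have hNMB : N ⊆ MB := Finset.filter_subset _ _
    have h1 : MB'.card + N.card = MB.card := by
      rw [hMB'def]
      exact Finset.card_sdiff_add_card_eq_card hNMB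
    have hdAB : Disjoint MA MB :=
      hdisj.mono (Finset.inter_subset_right) (Finset.inter_subset_right)
    have h2 : MA.card + MB.card = M.card := by
      rw [← Finset.card_union_of_disjoint hdAB, hMsplit]
    omega
  have hNcount : N.card + (cp G A B (S \ I)).card ≤ (cp G A B S).card := by
    have hsub : cp G A B (S \ I) ⊆ cp G A B S := cp_mono Finset.sdiff_subset
    have hsplit := Finset.card_sdiff_add_card_eq_card hsub
    suffices h : N.card ≤ (cp G A B S \ cp G A B (S \ I)).card by omega
    have hex : ∀ b ∈ N, ∃ a, a ∈ IA ∧ G.Adj a b := by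
      intro b hb
      rw [hNdef, Finset.mem_filter] at hb
      exact hb.2
    refine Finset.card_le_card_of_injOn
      (fun b => (if h : ∃ a, a ∈ IA ∧ G.Adj a b then h.choose else b, b)) ?_ ?_
    · intro b hb
      have hx := hex b hb
      simp only [dif_pos hx]
      obtain ⟨haIA, hadj⟩ := hx.choose_spec
      have hbMB : b ∈ MB := Finset.filter_subset _ _ hb
      have hbB : b ∈ B := Finset.inter_subset_right hbMB
      have hbS : b ∈ S := hMS (Finset.inter_subset_left hbMB)
      have haA : hx.choose ∈ A := hIA_A haIA
      have haS : hx.choose ∈ S := hMS (hIA_M haIA)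
      rw [Finset.mem_coe, Finset.mem_sdiff, mem_cp, mem_cp]
      refine ⟨⟨haA, hbB, haS, hbS, hadj⟩, ?_⟩
      rintro ⟨-, -, haSI, -, -⟩
      exact (Finset.mem_sdiff.mp haSI).2 (Finset.mem_union_left _ haIA)
    · intro b1 _ b2 _ heq
      exact congrArg Prod.snd heq
  omega
/-- If `(A, B)` is a bipartition of the vertex set of `G`, then
`s̊(G[A]) + s̊(G[B]) ≤ s̊(G) ≤ s̊(G[A]) + s̊(G[B]) + |[A,B]|`, where `[A,B]` is the
set of edges with one endpoint in `A` and one endpoint in `B`. -/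
theorem stmt6 (G : SimpleGraph V) (A B : Finset V)
    (hunion : A ∪ B = Finset.univ) (hdisj : Disjoint A B) :
    scost G A + scost G B ≤ scost G Finset.univ ∧
    scost G Finset.univ ≤
      scost G A + scost G B + {p : V × V | p.1 ∈ A ∧ p.2 ∈ B ∧ G.Adj p.1 p.2}.ncard := by
  constructor
  · have h := superadd G B A hdisj
    rwa [hunion] at h
  · have h := upper G A B hdisj Finset.univ (by rw [hunion])
    rw [Finset.univ_inter, Finset.univ_inter] at h
    have hset : {p : V × V | p.1 ∈ A ∧ p.2 ∈ B ∧ G.Adj p.1 p.2} =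
        ↑(cp G A B Finset.univ) := by
      ext p
      simp [mem_cp]
    rw [hset, Set.ncard_coe_finset]
    exact h
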